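/- Let ħ>0 and define for u ∈ ℝ the functions I(x,y)=exp(−(1/ħ)e^{x−y}), J_u(x,y)=exp((i/ħ)u(x−y) − (1/ħ)e^{y−x}), and Y_u(x,z)=(1+e^{x−z})^{(i/ħ)u}. Then for all real x_k, x_{k+1}, z_{k−1}, z_k and real γ, γ', the following exchange identity holds: ∫_ℝ I(x_k,y) J_{γ}(x_{k+1},y) I(y,z_k) J_{γ'}(y,z_{k−1}) dy · Y_{γ−γ'}(x_k,z_{k−1}) = Y_{γ−γ'}(x_{k+1},z_k) · ∫_ℝ I(x_k,y) J_{γ'}(x_{k+1},y) I(y,z_k) J_{γ}(y,z_{k−1}) dy. -/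

import Mathlib

open MeasureTheory

noncomputable section

/-- Kernel `I(x,y) = exp(−(1/hbar) e^{x−y})`. -/
def Iker (hbar x y : ℝ) : ℂ := Complex.exp (-(1 / hbar : ℝ) * Real.exp (x - y))

/-- Kernel `J_u(x,y) = exp((i/hbar)u(x−y) − (1/hbar) e^{y−x})`. -/
def Jker (hbar u x y : ℝ) : ℂ :=
  Complex.exp (Complex.I / hbar * u * (x - y) - (1 / hbar : ℝ) * Real.exp (y - x))

/-- Kernel `Y_u(x,z) = (1 + e^{x−z})^{(i/hbar)u}`. -/
def Yker (hbar u x z : ℝ) : ℂ :=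
  ((1 + Real.exp (x - z) : ℝ) : ℂ) ^ (Complex.I / hbar * u)

theorem exchange_identity (hbar : ℝ) (hh : 0 < hbar)
    (xk xk1 zkm zk γ γ' : ℝ) :
    (∫ y : ℝ, Iker hbar xk y * Jker hbar γ xk1 y * Iker hbar y zk * Jker hbar γ' y zkm)
        * Yker hbar (γ - γ') xk zkm
      = Yker hbar (γ - γ') xk1 zk
        * ∫ y : ℝ, Iker hbar xk y * Jker hbar γ' xk1 y * Iker hbar y zk * Jker hbar γ y zkm := by
  set a := Real.exp xk + Real.exp zkm with ha
  set b := Real.exp (-xk1) + Real.exp (-zk) with hbdef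
  have hap : 0 < a := by positivity
  have hbp : 0 < b := by positivity
  set c := Real.log a - Real.log b with hc
  have hec : Real.exp c = a / b := by
    rw [hc, Real.exp_sub, Real.exp_log hap, Real.exp_log hbp]
  have hY : ∀ (u x z : ℝ), Yker hbar u x z =
      Complex.exp (Complex.I / hbar * u * Real.log (1 + Real.exp (x - z))) := by
    intro u x z
    have hpos : (0:ℝ) < 1 + Real.exp (x - z) := by positivity
    rw [Yker, Complex.cpow_def_of_ne_zero (by exact_mod_cast hpos.ne'),
        ← Complex.ofReal_log hpos.le, mul_comm]
  have hlog1 : Real.log (1 + Real.exp (xk - zkm)) = Real.log a - zkm := by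
    have h1 : (1:ℝ) + Real.exp (xk - zkm) = Real.exp (-zkm) * a := by
      rw [ha, mul_add, ← Real.exp_add, ← Real.exp_add]
      norm_num [sub_eq_add_neg, add_comm]
    rw [h1, Real.log_mul (Real.exp_pos _).ne' hap.ne', Real.log_exp]; ring
  have hlog2 : Real.log (1 + Real.exp (xk1 - zk)) = xk1 + Real.log b := by
    have h1 : (1:ℝ) + Real.exp (xk1 - zk) = Real.exp xk1 * b := by
      rw [hbdef, mul_add, ← Real.exp_add, ← Real.exp_add]
      norm_num [sub_eq_add_neg]
    rw [h1, Real.log_mul (Real.exp_pos _).ne' hbp.ne', Real.log_exp]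
  have key : ∀ y : ℝ,
      Iker hbar xk y * Jker hbar γ xk1 y * Iker hbar y zk * Jker hbar γ' y zkm
          * Yker hbar (γ - γ') xk zkm
        = Yker hbar (γ - γ') xk1 zk *
          (Iker hbar xk (c - y) * Jker hbar γ' xk1 (c - y) * Iker hbar (c - y) zk
            * Jker hbar γ (c - y) zkm) := by
    intro y
    have hy := Real.exp_ne_zero y
    have h5 : Real.exp xk + Real.exp zkm ≠ 0 := by positivity
    have h6 : Real.exp (-xk1) + Real.exp (-zk) ≠ 0 := by positivity
    have h1 : Real.exp (xk - (c - y)) = Real.exp xk * Real.exp y * b / a := by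
      rw [show xk - (c - y) = xk + y - c by ring, Real.exp_sub, Real.exp_add, hec]
      field_simp
    have h2 : Real.exp ((c - y) - xk1) = a * Real.exp (-xk1) / (b * Real.exp y) := by
      rw [show (c - y) - xk1 = c - (y + xk1) by ring, Real.exp_sub, Real.exp_add, hec,
        Real.exp_neg]
      field_simp
    have h3 : Real.exp ((c - y) - zk) = a * Real.exp (-zk) / (b * Real.exp y) := by
      rw [show (c - y) - zk = c - (y + zk) by ring, Real.exp_sub, Real.exp_add, hec,
        Real.exp_neg]
      field_simp
    have h4 : Real.exp (zkm - (c - y)) = Real.exp zkm * Real.exp y * b / a := by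
      rw [show zkm - (c - y) = zkm + y - c by ring, Real.exp_sub, Real.exp_add, hec]
      field_simp
    have hR : Real.exp (xk - (c - y)) + Real.exp ((c - y) - xk1)
        + Real.exp ((c - y) - zk) + Real.exp (zkm - (c - y))
        = Real.exp (xk - y) + Real.exp (y - xk1) + Real.exp (y - zk)
          + Real.exp (zkm - y) := by
      rw [h1, h2, h3, h4, Real.exp_sub xk y, Real.exp_sub y xk1, Real.exp_sub y zk,
        Real.exp_sub zkm y]
      simp only [ha, hbdef, Real.exp_neg]
      field_simp
      ring
    have hP : γ' * (xk1 - (c - y)) + γ * ((c - y) - zkm)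
          + (γ - γ') * Real.log (1 + Real.exp (xk1 - zk))
        = γ * (xk1 - y) + γ' * (y - zkm)
          + (γ - γ') * Real.log (1 + Real.exp (xk - zkm)) := by
      rw [hlog1, hlog2, hc]; ring
    simp only [Iker, Jker, hY]
    rw [← Complex.exp_add, ← Complex.exp_add, ← Complex.exp_add, ← Complex.exp_add,
        ← Complex.exp_add, ← Complex.exp_add, ← Complex.exp_add, ← Complex.exp_add]
    congr 1
    have hRc : ((Real.exp (xk - (c - y)) : ℝ) : ℂ) + Real.exp ((c - y) - xk1)
        + Real.exp ((c - y) - zk) + Real.exp (zkm - (c - y))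
        = ((Real.exp (xk - y) : ℝ) : ℂ) + Real.exp (y - xk1) + Real.exp (y - zk)
          + Real.exp (zkm - y) := by exact_mod_cast hR
    have hPc : ((γ' * (xk1 - (c - y)) + γ * ((c - y) - zkm)
          + (γ - γ') * Real.log (1 + Real.exp (xk1 - zk)) : ℝ) : ℂ)
        = ((γ * (xk1 - y) + γ' * (y - zkm)
          + (γ - γ') * Real.log (1 + Real.exp (xk - zkm)) : ℝ) : ℂ) := by
      exact_mod_cast hP
    push_cast at hRc hPc ⊢
    linear_combination (1/(hbar:ℂ)) * hRc - Complex.I/(hbar:ℂ) * hPc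
  rw [← integral_mul_const]
  simp_rw [key]
  rw [integral_const_mul]
  congr 1
  exact integral_sub_left_eq_self
    (fun y => Iker hbar xk y * Jker hbar γ' xk1 y * Iker hbar y zk * Jker hbar γ y zkm) volume c

end
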